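/- Let A₀ be a symmetric n×n real matrix and consider the block matrix A = [[A₀, b J_{1,m} ⊗ I_n],[b J_{m,1} ⊗ I_n, A₁ ⊗ I_n]], where A₁ is a symmetric m×m real matrix whose row sums all equal ρ and b is a real number. If x is an eigenvector of A₀ with eigenvalue λ₀ and λ satisfies λ² − (λ₀ + ρ)λ + (λ₀ρ − m b²) = 0 with λ ≠ ρ, then the vector (x, (b/(λ − ρ)) · (J_{m,1} ⊗ x)) is an eigenvector of A with eigenvalue λ. -/

import Mathlib

open Matrix Kronecker BigOperators

/-- The adjacency matrix of the corona product: blocks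
`[[A₀, b·J_{1,m} ⊗ I_n],[b·J_{m,1} ⊗ I_n, A₁ ⊗ I_n]]`. -/
noncomputable def coronaA (n m : ℕ) (A0 : Matrix (Fin n) (Fin n) ℝ)
    (A1 : Matrix (Fin m) (Fin m) ℝ) (b : ℝ) :
    Matrix (Fin n ⊕ Fin m × Fin n) (Fin n ⊕ Fin m × Fin n) ℝ :=
  Matrix.fromBlocks A0
    (Matrix.of fun i p => if p.2 = i then b else 0)
    (Matrix.of fun p i => if p.2 = i then b else 0)
    (A1 ⊗ₖ (1 : Matrix (Fin n) (Fin n) ℝ))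

theorem corona_eigenvector (n m : ℕ) (A0 : Matrix (Fin n) (Fin n) ℝ) (hA0 : A0.IsSymm)
    (A1 : Matrix (Fin m) (Fin m) ℝ) (hA1 : A1.IsSymm) (ρ b : ℝ)
    (hrow : A1.mulVec (fun _ => 1) = fun _ => ρ)
    (x : Fin n → ℝ) (hx : x ≠ 0) (lam0 : ℝ) (hx0 : A0.mulVec x = lam0 • x)
    (lam : ℝ) (hlam : lam ^ 2 - (lam0 + ρ) * lam + (lam0 * ρ - m * b ^ 2) = 0)
    (hne : lam ≠ ρ) :
    (coronaA n m A0 A1 b).mulVec (Sum.elim x fun p => (b / (lam - ρ)) * x p.2) =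
      lam • (Sum.elim x fun p => (b / (lam - ρ)) * x p.2) := by
  have hl : lam - ρ ≠ 0 := sub_ne_zero.mpr hne
  have hkey : lam0 + m * b ^ 2 / (lam - ρ) = lam := by
    field_simp
    nlinarith [hlam]
  funext z
  cases z with
  | inl i =>
    have h0 : A0.mulVec x i = lam0 * x i := by
      rw [hx0]; simp
    simp only [coronaA, mulVec, dotProduct, Fintype.sum_sum_type, fromBlocks_apply₁₁,
      fromBlocks_apply₁₂, Sum.elim_inl, Sum.elim_inr, of_apply, Pi.smul_apply, smul_eq_mul,
      Fintype.sum_prod_type]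
    have hsum : ∀ q : Fin m, ∑ j : Fin n,
        (if j = i then b else 0) * (b / (lam - ρ) * x j) = b * (b / (lam - ρ) * x i) := by
      intro q
      rw [Finset.sum_eq_single i]
      · simp
      · intro j _ hj; simp [hj]
      · simp
    have := h0
    simp only [mulVec, dotProduct] at this
    rw [Finset.sum_congr rfl (fun q _ => hsum q), Finset.sum_const, Finset.card_univ,
      Fintype.card_fin, this]
    have : lam0 * x i + (m : ℝ) * (b * (b / (lam - ρ) * x i)) =
        (lam0 + m * b ^ 2 / (lam - ρ)) * x i := by
      field_simp
    rw [nsmul_eq_mul, this, hkey]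
  | inr p =>
    obtain ⟨q, i⟩ := p
    have hr : ∑ p : Fin m, A1 q p = ρ := by
      have := congrFun hrow q
      simpa [mulVec, dotProduct] using this
    simp only [coronaA, mulVec, dotProduct, Fintype.sum_sum_type, fromBlocks_apply₂₁,
      fromBlocks_apply₂₂, Sum.elim_inl, Sum.elim_inr, of_apply, Pi.smul_apply, smul_eq_mul,
      Fintype.sum_prod_type, kroneckerMap_apply]
    have h1 : ∑ j : Fin n, (if i = j then b else 0) * x j = b * x i := by
      rw [Finset.sum_eq_single i]
      · simp
      · intro j _ hj; simp [Ne.symm hj]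
      · simp
    have h2 : ∀ p : Fin m, ∑ j : Fin n,
        A1 q p * (1 : Matrix (Fin n) (Fin n) ℝ) i j * (b / (lam - ρ) * x j) =
        A1 q p * (b / (lam - ρ) * x i) := by
      intro p
      rw [Finset.sum_eq_single i]
      · simp
      · intro j _ hj; simp [one_apply, Ne.symm hj]
      · simp
    rw [h1, Finset.sum_congr rfl (fun p _ => h2 p), ← Finset.sum_mul, hr]
    field_simp
    ring
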